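/- Let P be a set of states of a deterministic automaton and let {P₁, P₂} be a partition of P (P = P₁ ∪ P₂, P₁ ∩ P₂ = ∅, both nonempty). For any letter a and any set of states R, the common refinement of the partitions (P,a)|R and (P₁,a)|R equals the common refinement of (P,a)|R and (P₂,a)|R, and also equals the common refinement of (P₁,a)|R and (P₂,a)|R. -/
import Mathlib

def splitPart {Q A : Type*} (step : Q → A → Q) (P : Set Q) (a : A) (R : Set Q) :
    Set (Set Q) :=
  {S | S.Nonempty ∧ (S = R ∩ {q | step q a ∈ P} ∨ S = R \ {q | step q a ∈ P})}

/-- Common refinement of two partitions: nonempty intersections of blocks. -/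
def commonRef {Q : Type*} (Ps Qs : Set (Set Q)) : Set (Set Q) :=
  {S | S.Nonempty ∧ ∃ B ∈ Ps, ∃ C ∈ Qs, S = B ∩ C}

private def sp {Q : Type*} (R B : Set Q) : Set (Set Q) :=
  {S | S.Nonempty ∧ (S = R ∩ B ∨ S = R \ B)}

private def tgt {Q : Type*} (R B₁ B₂ : Set Q) : Set (Set Q) :=
  {S | S.Nonempty ∧ (S = R ∩ B₁ ∨ S = R ∩ B₂ ∨ S = R \ (B₁ ∪ B₂))}

private lemma tgt_comm {Q : Type*} (R B₁ B₂ : Set Q) : tgt R B₁ B₂ = tgt R B₂ B₁ := by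
  ext S; simp only [tgt, Set.mem_setOf_eq, Set.union_comm B₁ B₂]; tauto


private lemma neL {Q : Type*} {B C S : Set Q} (e : B ∩ C = S) (hS : S.Nonempty) : B.Nonempty := by
  obtain ⟨q, hq⟩ := hS; rw [← e] at hq; exact ⟨q, hq.1⟩

private lemma neR {Q : Type*} {B C S : Set Q} (e : B ∩ C = S) (hS : S.Nonempty) : C.Nonempty := by
  obtain ⟨q, hq⟩ := hS; rw [← e] at hq; exact ⟨q, hq.2⟩

private lemma L1 {Q : Type*} (R B₁ B₂ : Set Q) (hd : B₁ ∩ B₂ = ∅) :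
    commonRef (sp R (B₁ ∪ B₂)) (sp R B₁) = tgt R B₁ B₂ := by
  have hd' : ∀ q, q ∈ B₁ → q ∈ B₂ → False := fun q h1 h2 => by
    have : q ∈ B₁ ∩ B₂ := ⟨h1, h2⟩; simp [hd] at this
  have e1 : (R ∩ (B₁ ∪ B₂)) ∩ (R ∩ B₁) = R ∩ B₁ := by
    ext q; simp only [Set.mem_inter_iff, Set.mem_union]; tauto
  have e2 : (R ∩ (B₁ ∪ B₂)) ∩ (R \ B₁) = R ∩ B₂ := by
    ext q; simp only [Set.mem_inter_iff, Set.mem_union, Set.mem_diff]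
    constructor
    · rintro ⟨⟨hq, h⟩, _, hn⟩; exact ⟨hq, h.resolve_left hn⟩
    · rintro ⟨hq, h⟩; exact ⟨⟨hq, Or.inr h⟩, hq, fun h1 => hd' q h1 h⟩
  have e3 : (R \ (B₁ ∪ B₂)) ∩ (R ∩ B₁) = (∅ : Set Q) := by
    ext q; simp only [Set.mem_inter_iff, Set.mem_union, Set.mem_diff, Set.mem_empty_iff_false]
    tauto
  have e4 : (R \ (B₁ ∪ B₂)) ∩ (R \ B₁) = R \ (B₁ ∪ B₂) := by
    ext q; simp only [Set.mem_inter_iff, Set.mem_union, Set.mem_diff]; tauto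
  ext S
  constructor
  · rintro ⟨hS, B, ⟨_, hB | hB⟩, C, ⟨_, hC | hC⟩, rfl⟩ <;> subst hB <;> subst hC
    · exact ⟨hS, Or.inl e1⟩
    · exact ⟨hS, Or.inr (Or.inl e2)⟩
    · rw [e3] at hS; exact absurd hS (by simp)
    · exact ⟨hS, Or.inr (Or.inr e4)⟩
  · rintro ⟨hS, hS1 | hS2 | hS3⟩
    · subst hS1
      exact ⟨hS, _, ⟨neL e1 hS, Or.inl rfl⟩, _, ⟨neR e1 hS, Or.inl rfl⟩, e1.symm⟩
    · subst hS2
      refine ⟨hS, R ∩ (B₁ ∪ B₂), ⟨?_, Or.inl rfl⟩, R \ B₁, ⟨?_, Or.inr rfl⟩, e2.symm⟩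
      · exact neL e2 hS
      · exact neR e2 hS
    · subst hS3
      refine ⟨hS, R \ (B₁ ∪ B₂), ⟨hS, Or.inr rfl⟩, R \ B₁, ⟨?_, Or.inr rfl⟩, e4.symm⟩
      exact neR e4 hS

private lemma L2 {Q : Type*} (R B₁ B₂ : Set Q) (hd : B₁ ∩ B₂ = ∅) :
    commonRef (sp R B₁) (sp R B₂) = tgt R B₁ B₂ := by
  have hd' : ∀ q, q ∈ B₁ → q ∈ B₂ → False := fun q h1 h2 => by
    have : q ∈ B₁ ∩ B₂ := ⟨h1, h2⟩; simp [hd] at this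
  have e1 : (R ∩ B₁) ∩ (R ∩ B₂) = (∅ : Set Q) := by
    ext q; simp only [Set.mem_inter_iff, Set.mem_empty_iff_false]; tauto
  have e2 : (R ∩ B₁) ∩ (R \ B₂) = R ∩ B₁ := by
    ext q; simp only [Set.mem_inter_iff, Set.mem_diff]; tauto
  have e3 : (R \ B₁) ∩ (R ∩ B₂) = R ∩ B₂ := by
    ext q; simp only [Set.mem_inter_iff, Set.mem_diff]; tauto
  have e4 : (R \ B₁) ∩ (R \ B₂) = R \ (B₁ ∪ B₂) := by
    ext q; simp only [Set.mem_inter_iff, Set.mem_diff, Set.mem_union]; tauto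
  ext S
  constructor
  · rintro ⟨hS, B, ⟨_, hB | hB⟩, C, ⟨_, hC | hC⟩, rfl⟩ <;> subst hB <;> subst hC
    · rw [e1] at hS; exact absurd hS (by simp)
    · exact ⟨hS, Or.inl e2⟩
    · exact ⟨hS, Or.inr (Or.inl e3)⟩
    · exact ⟨hS, Or.inr (Or.inr e4)⟩
  · rintro ⟨hS, hS1 | hS2 | hS3⟩
    · subst hS1
      refine ⟨hS, R ∩ B₁, ⟨?_, Or.inl rfl⟩, R \ B₂, ⟨?_, Or.inr rfl⟩, e2.symm⟩
      · exact neL e2 hS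
      · exact neR e2 hS
    · subst hS2
      refine ⟨hS, R \ B₁, ⟨?_, Or.inr rfl⟩, R ∩ B₂, ⟨?_, Or.inl rfl⟩, e3.symm⟩
      · exact neL e3 hS
      · exact neR e3 hS
    · subst hS3
      refine ⟨hS, R \ B₁, ⟨?_, Or.inr rfl⟩, R \ B₂, ⟨?_, Or.inr rfl⟩, e4.symm⟩
      · exact neL e4 hS
      · exact neR e4 hS

theorem stmt_1 {Q A : Type*} (step : Q → A → Q) (P P₁ P₂ : Set Q)
    (hunion : P = P₁ ∪ P₂) (hdisj : P₁ ∩ P₂ = ∅)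
    (h1 : P₁.Nonempty) (h2 : P₂.Nonempty) (a : A) (R : Set Q) :
    commonRef (splitPart step P a R) (splitPart step P₁ a R) =
        commonRef (splitPart step P a R) (splitPart step P₂ a R) ∧
      commonRef (splitPart step P a R) (splitPart step P₁ a R) =
        commonRef (splitPart step P₁ a R) (splitPart step P₂ a R) := by
  set B₁ : Set Q := {q | step q a ∈ P₁} with hB₁
  set B₂ : Set Q := {q | step q a ∈ P₂} with hB₂
  have hB : {q | step q a ∈ P} = B₁ ∪ B₂ := by
    ext q; simp [hB₁, hB₂, hunion]
  have hd : B₁ ∩ B₂ = ∅ := by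
    ext q; simp only [hB₁, hB₂, Set.mem_inter_iff, Set.mem_setOf_eq, Set.mem_empty_iff_false,
      iff_false, not_and]
    intro ha hb
    have : step q a ∈ P₁ ∩ P₂ := ⟨ha, hb⟩
    simp [hdisj] at this
  have hsp : ∀ P' : Set Q, splitPart step P' a R = sp R {q | step q a ∈ P'} := fun _ => rfl
  rw [hsp, hsp, hsp, hB]
  have hd' : B₂ ∩ B₁ = ∅ := by rw [Set.inter_comm]; exact hd
  refine ⟨?_, ?_⟩
  · rw [L1 R B₁ B₂ hd, Set.union_comm, L1 R B₂ B₁ hd', tgt_comm]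
  · rw [L1 R B₁ B₂ hd, L2 R B₁ B₂ hd]
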